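/- Let G be a finite abelian group. The power graph P(G) has more than one star vertex if and only if G is a nontrivial cyclic group. -/
import Mathlib


/-- The power graph of a group: distinct `x, y` are adjacent iff one is a
positive power of the other. -/
def powerGraph (G : Type*) [Group G] : SimpleGraph G :=
  SimpleGraph.fromRel (fun x y => ∃ m : ℕ, 0 < m ∧ x = y ^ m)

/-- The set of star vertices of the power graph. -/
def starSet (G : Type*) [Group G] : Set G :=
  {x : G | ∀ y : G, y ≠ x → (powerGraph G).Adj x y}

open Subgroup

/-- In a cyclic group, elements of the same prime order generate the same subgroup. -/
lemma mem_zpowers_of_same_prime_order {G : Type*} [Group G] [Finite G] {c a b : G} {p : ℕ}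
    (hp : p.Prime) (ha : a ∈ zpowers c) (hb : b ∈ zpowers c)
    (hoa : orderOf a = p) (hob : orderOf b = p) : b ∈ zpowers a := by
  obtain ⟨i, hi⟩ := Submonoid.mem_powers_iff _ _ |>.mp (mem_powers_iff_mem_zpowers.mpr ha)
  obtain ⟨j, hj⟩ := Submonoid.mem_powers_iff _ _ |>.mp (mem_powers_iff_mem_zpowers.mpr hb)
  set n := orderOf c with hn
  have hoi : n / Nat.gcd n i = p := by rw [← hoa, ← hi, orderOf_pow]
  have hoj : n / Nat.gcd n j = p := by rw [← hob, ← hj, orderOf_pow]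
  have hgi : n = Nat.gcd n i * p := Nat.eq_mul_of_div_eq_right (Nat.gcd_dvd_left _ _) hoi
  have hgj : n = Nat.gcd n j * p := Nat.eq_mul_of_div_eq_right (Nat.gcd_dvd_left _ _) hoj
  have hgg : Nat.gcd n i = Nat.gcd n j :=
    Nat.eq_of_mul_eq_mul_right hp.pos (hgi ▸ hgj)
  have key : c ^ ((Nat.gcd n i : ℤ)) = a ^ (Nat.gcdB n i) := by
    rw [Nat.gcd_eq_gcd_ab, zpow_add, zpow_mul, zpow_mul, zpow_natCast, zpow_natCast,
      pow_orderOf_eq_one, one_zpow, one_mul, hi]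
  have hbz : c ^ Nat.gcd n i ∈ zpowers a :=
    mem_zpowers_iff.mpr ⟨Nat.gcdB n i, by rw [← key, zpow_natCast]⟩
  have hb' : b = (c ^ Nat.gcd n i) ^ (j / Nat.gcd n i) := by
    rw [← pow_mul, hgg, Nat.mul_div_cancel' (Nat.gcd_dvd_right n j), hj]
  rw [hb']
  exact pow_mem hbz _

/-- A finite noncyclic abelian group contains two distinct subgroups of prime order `p`. -/
lemma exists_two_prime_order {G : Type*} [CommGroup G] [Finite G] (h : ¬ IsCyclic G) :
    ∃ (p : ℕ) (a b : G), p.Prime ∧ orderOf a = p ∧ orderOf b = p ∧ b ∉ zpowers a := by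
  obtain ⟨g, hg⟩ := Monoid.exists_orderOf_eq_exponent (Monoid.ExponentExists.of_finite (G := G))
  set e := Monoid.exponent G with he
  have hepos : 0 < e := Monoid.exponent_pos.mpr Monoid.ExponentExists.of_finite
  -- get an element outside zpowers g
  have hne : ¬ ∀ x : G, x ∈ zpowers g := fun hall => h ⟨⟨g, hall⟩⟩
  push_neg at hne
  obtain ⟨h₀, hh₀⟩ := hne
  -- the quotient by zpowers g is nontrivial
  let Q := G ⧸ zpowers g
  have hQ1 : (QuotientGroup.mk h₀ : Q) ≠ 1 := by
    rw [Ne, QuotientGroup.eq_one_iff]; exact hh₀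
  haveI : Nontrivial Q := nontrivial_of_ne _ _ hQ1
  set p := (Nat.card Q).minFac with hp'
  have hcQ : Nat.card Q ≠ 1 := (Finite.one_lt_card_iff_nontrivial.mpr ‹_›).ne'
  have hp : p.Prime := Nat.minFac_prime hcQ
  haveI : Fact p.Prime := ⟨hp⟩
  obtain ⟨y, hy⟩ := exists_prime_orderOf_dvd_card' (G := Q) p (Nat.minFac_dvd _)
  obtain ⟨h₁, rfl⟩ := QuotientGroup.mk_surjective y
  -- h₁ is not a power of g, but h₁ ^ p is
  have hh₁ : h₁ ∉ zpowers g := by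
    intro hm
    have : (QuotientGroup.mk h₁ : Q) = 1 := (QuotientGroup.eq_one_iff _).mpr hm
    rw [this, orderOf_one] at hy
    exact hp.ne_one hy.symm
  have hh₁p : h₁ ^ p ∈ zpowers g := by
    rw [← QuotientGroup.eq_one_iff]
    have : (QuotientGroup.mk (h₁ ^ p) : Q) = (QuotientGroup.mk h₁ : Q) ^ p := rfl
    rw [this, ← hy, pow_orderOf_eq_one]
  obtain ⟨k, hk⟩ := Submonoid.mem_powers_iff _ _ |>.mp (mem_powers_iff_mem_zpowers.mpr hh₁p)
  -- p divides e
  have hpe : p ∣ e := by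
    have h1 : orderOf (QuotientGroup.mk h₁ : Q) ∣ orderOf h₁ :=
      orderOf_map_dvd (QuotientGroup.mk' (zpowers g)) h₁
    rw [hy] at h1
    exact h1.trans (Monoid.order_dvd_exponent h₁)
  have heq : e = p * (e / p) := (Nat.mul_div_cancel' hpe).symm
  have hep : 0 < e / p := Nat.div_pos (Nat.le_of_dvd hepos hpe) hp.pos
  -- p divides k
  have hpk : p ∣ k := by
    have h1 : g ^ (k * (e / p)) = 1 := by
      rw [pow_mul, hk, ← pow_mul, ← heq, Monoid.pow_exponent_eq_one]
    have h2 := orderOf_dvd_of_pow_eq_one h1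
    rw [hg] at h2
    nth_rewrite 1 [heq] at h2
    exact (Nat.mul_dvd_mul_iff_right hep).mp h2
  -- construct b of order p not in zpowers g
  set b := h₁ * (g ^ (k / p))⁻¹ with hbdef
  have hbp : b ^ p = 1 := by
    rw [hbdef, mul_pow, inv_pow, ← pow_mul, Nat.div_mul_cancel hpk, hk, mul_inv_cancel]
  have hbg : b ∉ zpowers g := by
    intro hm
    apply hh₁
    have : h₁ = b * g ^ (k / p) := by rw [hbdef, inv_mul_cancel_right]
    rw [this]
    exact mul_mem hm (pow_mem (mem_zpowers g) _)
  have hbne : b ≠ 1 := fun hb1 => hbg (hb1 ▸ one_mem _)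
  have hob : orderOf b = p := by
    rcases (Nat.Prime.eq_one_or_self_of_dvd hp _ (orderOf_dvd_of_pow_eq_one hbp)) with h1 | h1
    · exact absurd (orderOf_eq_one_iff.mp h1) hbne
    · exact h1
  -- construct a of order p inside zpowers g
  refine ⟨p, g ^ (e / p), b, hp, ?_, hob, ?_⟩
  · rw [orderOf_pow, hg, Nat.gcd_eq_right (Nat.div_dvd_of_dvd hpe),
      Nat.div_div_self hpe hepos.ne']
  · intro hm
    exact hbg (zpowers_le.mpr (pow_mem (mem_zpowers g) _) hm)

theorem abelian_more_than_one_star_iff_cyclic {G : Type*} [CommGroup G]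
    [Finite G] :
    1 < (starSet G).ncard ↔ IsCyclic G ∧ Nontrivial G := by
  constructor
  · intro h
    obtain ⟨x, y, hx, hy, hxy⟩ := (Set.one_lt_ncard_iff (Set.toFinite _)).mp h
    -- pick a star vertex which is not 1
    obtain ⟨z, hz, hzne⟩ : ∃ z, z ∈ starSet G ∧ z ≠ 1 := by
      by_cases hx1 : x = 1
      · exact ⟨y, hy, fun h1 => hxy (by rw [hx1, h1])⟩
      · exact ⟨x, hx, hx1⟩
    haveI : Nontrivial G := nontrivial_of_ne z 1 hzne
    refine ⟨?_, ‹_›⟩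
    by_contra hcyc
    obtain ⟨p, a, b, hp, hoa, hob, hab⟩ := exists_two_prime_order hcyc
    -- every element of order p is a power of z
    have key : ∀ w : G, orderOf w = p → w ∈ zpowers z := by
      intro w how
      by_cases hwz : w = z
      · exact hwz ▸ mem_zpowers w
      · have hadj := hz w (by exact hwz)
        rw [powerGraph, SimpleGraph.fromRel_adj] at hadj
        rcases hadj.2 with ⟨m, _, hm⟩ | ⟨m, _, hm⟩
        · -- z = w ^ m, so z ∈ zpowers w
          have hzw : z ∈ zpowers w := mem_zpowers_iff.mpr ⟨(m : ℤ), by rw [zpow_natCast, hm]⟩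
          have hoz : orderOf z = p := by
            have h1 : orderOf z ∣ p := by
              have : z ^ p = 1 := by
                obtain ⟨l, hl⟩ := mem_zpowers_iff.mp hzw
                rw [← hl, ← zpow_natCast, ← zpow_mul, mul_comm, zpow_mul, zpow_natCast,
                  ← how, pow_orderOf_eq_one, one_zpow]
              exact orderOf_dvd_of_pow_eq_one this
            rcases hp.eq_one_or_self_of_dvd _ h1 with h2 | h2
            · exact absurd (orderOf_eq_one_iff.mp h2) hzne
            · exact h2
          exact mem_zpowers_of_same_prime_order hp hzw (mem_zpowers w) hoz how
        · exact mem_zpowers_iff.mpr ⟨(m : ℤ), by rw [zpow_natCast, hm]⟩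
    exact hab (mem_zpowers_of_same_prime_order hp (key a hoa) (key b hob) hoa hob)
  · rintro ⟨hcyc, hnt⟩
    obtain ⟨g, hg⟩ := hcyc.exists_generator
    have hg1 : g ≠ 1 := by
      intro h1
      obtain ⟨x, hx⟩ := exists_ne (1 : G)
      obtain ⟨k, hk⟩ := mem_zpowers_iff.mp (hg x)
      rw [h1, one_zpow] at hk
      exact hx hk.symm
    have h1star : (1 : G) ∈ starSet G := by
      intro y hy
      rw [powerGraph, SimpleGraph.fromRel_adj]
      exact ⟨Ne.symm hy, Or.inl ⟨orderOf y, orderOf_pos y, (pow_orderOf_eq_one y).symm⟩⟩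
    have hgstar : g ∈ starSet G := by
      intro y hy
      rw [powerGraph, SimpleGraph.fromRel_adj]
      refine ⟨Ne.symm hy, Or.inr ?_⟩
      obtain ⟨m, hm⟩ := Submonoid.mem_powers_iff _ _ |>.mp (mem_powers_iff_mem_zpowers.mpr (hg y))
      by_cases hy1 : y = 1
      · exact ⟨orderOf g, orderOf_pos g, by rw [hy1, pow_orderOf_eq_one]⟩
      · refine ⟨m, ?_, hm.symm⟩
        rcases Nat.eq_zero_or_pos m with h | h
        · exact absurd (by rw [← hm, h, pow_zero]) hy1
        · exact h
    rw [Set.one_lt_ncard_iff (Set.toFinite _)]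
    exact ⟨1, g, h1star, hgstar, Ne.symm hg1⟩
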